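/- For integers k ≥ 0, q ≥ 0, and p ≥ 1, the number of q-dominating sequences with exactly k 1's and qk+p 0's equals (p/((q+1)k+p)) · binom((q+1)k+p, k); in particular this rational expression is an integer. -/

import Mathlib

/-- A sequence of 0's (`false`) and 1's (`true`) is `q`-dominating if in every
nonempty prefix the number of 0's strictly exceeds `q` times the number of 1's. -/
def QDominating (q : ℕ) (l : List Bool) : Prop :=
  ∀ m : ℕ, 1 ≤ m → m ≤ l.length →
    q * (l.take m).count true < (l.take m).count false

namespace CQDaux

/-- The set of `q`-dominating sequences with `a` zeros and `b` ones. -/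
def S (q a b : ℕ) : Set (List Bool) :=
  {l | l.count true = b ∧ l.count false = a ∧ QDominating q l}

lemma count_add (l : List Bool) : l.count true + l.count false = l.length := by
  induction l with
  | nil => simp
  | cons x t ih => cases x <;> simp [List.count_cons] <;> omega

lemma finite_S (q a b : ℕ) : (S q a b).Finite := by
  apply (List.finite_length_eq Bool (a + b)).subset
  rintro l ⟨ht, hf, -⟩
  have := count_add l
  simp only [Set.mem_setOf_eq]
  omega

lemma dom_append (q : ℕ) (l : List Bool) (x : Bool) :
    QDominating q (l ++ [x]) ↔
      QDominating q l ∧ q * (l ++ [x]).count true < (l ++ [x]).count false := by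
  constructor
  · intro h
    refine ⟨fun m h1 h2 => ?_, ?_⟩
    · have := h m h1 (by simp; omega)
      rwa [List.take_append_of_le_length h2] at this
    · have := h (l.length + 1) (by omega) (by simp)
      rwa [List.take_of_length_le (by simp)] at this
  · rintro ⟨hd, hfull⟩ m h1 h2
    rcases Nat.lt_or_ge m (l.length + 1) with hm | hm
    · rw [List.take_append_of_le_length (by omega)]
      exact hd m h1 (by omega)
    · rwa [List.take_of_length_le (by simp; omega)]

lemma mem_append_false {q a b : ℕ} {l : List Bool} (hab : q * b < a) (ha : 1 ≤ a)
    (ht : l.count true = b) (hf : l.count false = a - 1) (hd : QDominating q l) :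
    l ++ [false] ∈ S q a b := by
  refine ⟨?_, ?_, ?_⟩
  · rw [List.count_append]; simp [ht]
  · rw [List.count_append]; simp [hf]; omega
  · rw [dom_append]
    refine ⟨hd, ?_⟩
    rw [List.count_append, List.count_append]
    simp [ht, hf]
    have : a - 1 + 1 = a := by omega
    omega

lemma mem_append_true {q a b : ℕ} {l : List Bool} (hab : q * b < a) (hb : 1 ≤ b)
    (ht : l.count true = b - 1) (hf : l.count false = a) (hd : QDominating q l) :
    l ++ [true] ∈ S q a b := by
  refine ⟨?_, ?_, ?_⟩
  · rw [List.count_append]; simp [ht]; omega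
  · rw [List.count_append]; simp [hf]
  · rw [dom_append]
    refine ⟨hd, ?_⟩
    rw [List.count_append, List.count_append]
    simp [ht, hf]
    have : b - 1 + 1 = b := by omega
    rw [this]; exact hab

lemma S_recursion (q a b : ℕ) (hb : 1 ≤ b) (hab : q * b < a) :
    S q a b = (fun l => l ++ [false]) '' S q (a - 1) b ∪
      (fun l => l ++ [true]) '' S q a (b - 1) := by
  ext l
  constructor
  · rintro ⟨ht, hf, hd⟩
    have hlen : l.length = b + a := by have := count_add l; omega
    have hne : l ≠ [] := by
      intro h; rw [h] at hlen; simp at hlen; omega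
    have hdecomp := List.dropLast_append_getLast hne
    have hdom : QDominating q l.dropLast ∧
        q * l.count true < l.count false := by
      have := (dom_append q l.dropLast (l.getLast hne)).mp (by rwa [hdecomp])
      rwa [hdecomp] at this
    rcases hg : l.getLast hne with _ | _
    · left
      refine ⟨l.dropLast, ⟨?_, ?_, hdom.1⟩, by rw [← hg]; exact hdecomp⟩
      · have : l.count true = l.dropLast.count true + ([(false : Bool)].count true) := by
          conv_lhs => rw [← hdecomp, hg]
          rw [List.count_append]
        simp at this; omega
      · have : l.count false = l.dropLast.count false + ([(false : Bool)].count false) := by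
          conv_lhs => rw [← hdecomp, hg]
          rw [List.count_append]
        simp at this; omega
    · right
      refine ⟨l.dropLast, ⟨?_, ?_, hdom.1⟩, by rw [← hg]; exact hdecomp⟩
      · have : l.count true = l.dropLast.count true + ([(true : Bool)].count true) := by
          conv_lhs => rw [← hdecomp, hg]
          rw [List.count_append]
        simp at this; omega
      · have : l.count false = l.dropLast.count false + ([(true : Bool)].count false) := by
          conv_lhs => rw [← hdecomp, hg]
          rw [List.count_append]
        simp at this; omega
  · rintro (⟨l', hl', rfl⟩ | ⟨l', hl', rfl⟩)
    · exact mem_append_false hab (by omega) hl'.1 hl'.2.1 hl'.2.2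
    · exact mem_append_true hab hb hl'.1 hl'.2.1 hl'.2.2

lemma ncard_recursion (q a b : ℕ) (hb : 1 ≤ b) (hab : q * b < a) :
    (S q a b).ncard = (S q (a - 1) b).ncard + (S q a (b - 1)).ncard := by
  rw [S_recursion q a b hb hab]
  have hinj : ∀ x : Bool, Function.Injective (fun l : List Bool => l ++ [x]) := by
    intro x l1 l2 h
    simpa using h
  rw [Set.ncard_union_eq ?_ ((finite_S q (a-1) b).image _) ((finite_S q a (b-1)).image _),
    Set.ncard_image_of_injective _ (hinj false), Set.ncard_image_of_injective _ (hinj true)]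
  rw [Set.disjoint_left]
  rintro l ⟨l1, -, h1⟩ ⟨l2, -, h2⟩
  have h3 : l1 ++ [false] = l2 ++ [true] := by
    simpa using h1.trans h2.symm
  have := congrArg List.reverse h3
  simp at this

lemma S_zero (q a : ℕ) (ha : 1 ≤ a) : S q a 0 = {List.replicate a false} := by
  ext l
  constructor
  · rintro ⟨ht, hf, -⟩
    have hlen : l.length = a := by have := count_add l; omega
    have : ∀ x ∈ l, x = false := by
      intro x hx
      cases x
      · rfl
      · exfalso
        have := List.count_pos_iff.mpr hx
        omega
    simp only [Set.mem_singleton_iff]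
    rw [List.eq_replicate_iff]
    exact ⟨hlen, this⟩
  · rintro rfl
    refine ⟨by simp [List.count_replicate], by simp [List.count_replicate], fun m h1 h2 => ?_⟩
    simp only [List.length_replicate] at h2
    simp [List.take_replicate, List.count_replicate]
    omega

lemma S_empty (q a b : ℕ) (hb : 1 ≤ b) (hab : a ≤ q * b) : S q a b = ∅ := by
  ext l
  simp only [Set.mem_empty_iff_false, iff_false]
  rintro ⟨ht, hf, hd⟩
  have hlen : l.length = b + a := by have := count_add l; omega
  have := hd l.length (by omega) le_rfl
  rw [List.take_of_length_le le_rfl, ht, hf] at this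
  omega

lemma choose_id1 (n b : ℕ) (hb : 1 ≤ b) (hn : 1 ≤ n) :
    (n : ℚ) * Nat.choose (n - 1) (b - 1) = Nat.choose n b * b := by
  have := Nat.add_one_mul_choose_eq (n - 1) (b - 1)
  rw [Nat.sub_add_cancel hn,
    Nat.sub_add_cancel hb] at this
  exact_mod_cast congrArg (Nat.cast : ℕ → ℚ) this

lemma choose_id2 (n b : ℕ) (hb : b + 1 ≤ n) :
    (n : ℚ) * Nat.choose (n - 1) b = Nat.choose n b * (n - b) := by
  have h1 : Nat.choose (n - 1) b = Nat.choose (n - 1) (n - 1 - b) :=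
    (Nat.choose_symm (by omega)).symm
  have h2 : n - 1 - b = (n - b) - 1 := by omega
  have h3 := choose_id1 n (n - b) (by omega) (by omega)
  rw [h1, h2, h3, Nat.choose_symm (by omega)]
  push_cast [Nat.cast_sub (by omega : b ≤ n)]
  ring

lemma key (q : ℕ) : ∀ n a b : ℕ, a + b = n → q * b ≤ a → 1 ≤ a + b →
    ((S q a b).ncard : ℚ) = ((a : ℚ) - q * b) / (a + b) * Nat.choose (a + b) b := by
  intro n
  induction n using Nat.strong_induction_on with
  | _ n ih =>
    intro a b hn hqb hab1
    rcases Nat.eq_zero_or_pos b with hb | hb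
    · subst hb
      rw [S_zero q a (by omega), Set.ncard_singleton]
      have ha : (a : ℚ) ≠ 0 := Nat.cast_ne_zero.mpr (by omega)
      simp only [Nat.add_zero, Nat.choose_zero_right, Nat.cast_zero, mul_zero,
        sub_zero, add_zero, Nat.cast_one, mul_one]
      field_simp
    · rcases Nat.lt_or_ge (q * b) a with hlt | hge
      · -- recursion case
        have ha : 1 ≤ a := by omega
        rw [ncard_recursion q a b hb hlt]
        have h1 := ih (n - 1) (by omega) (a - 1) b (by omega) (by omega) (by omega)
        have h2 := ih (n - 1) (by omega) a (b - 1)  (by omega)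
          (le_trans (Nat.mul_le_mul (le_refl q) (Nat.sub_le b 1)) hqb) (by omega)
        push_cast [Nat.cast_sub ha, Nat.cast_sub hb] at h1 h2 ⊢
        rw [h1, h2]
        have e1 : a - 1 + b = a + b - 1 := by omega
        have e2 : a + (b - 1) = a + b - 1 := by omega
        rw [e1, e2]
        have I1 := choose_id1 (a + b) b hb (by omega)
        have I2 := choose_id2 (a + b) b (by omega)
        push_cast at I1 I2
        have hD : ((a : ℚ) + b) ≠ 0 := by
          have : (1 : ℚ) ≤ (a : ℚ) + b := by
            have : (1 : ℕ) ≤ a + b := by omega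
            exact_mod_cast (by push_cast; exact_mod_cast this : (1:ℚ) ≤ ((a + b : ℕ) : ℚ))
          linarith
        have hD1 : ((a : ℚ) + b - 1) ≠ 0 := by
          have h2' : (2 : ℕ) ≤ a + b := by omega
          have : (2 : ℚ) ≤ (a : ℚ) + b := by exact_mod_cast h2'
          linarith
        have hd1 : (a : ℚ) - 1 + b = (a : ℚ) + b - 1 := by ring
        have hd2 : (a : ℚ) + ((b : ℚ) - 1) = (a : ℚ) + b - 1 := by ring
        rw [div_mul_eq_mul_div, div_mul_eq_mul_div, div_mul_eq_mul_div, hd1, hd2,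
          ← add_div, div_eq_div_iff hD1 hD]
        linear_combination ((a : ℚ) - 1 - q * b) * I2 + ((a : ℚ) + q - q * b) * I1
      · -- empty case
        rw [S_empty q a b hb hge]
        have heq : a = q * b := le_antisymm hge hqb
        simp [heq]

end CQDaux

/-- For `k, q ≥ 0` and `p ≥ 1`, the number of `q`-dominating sequences with exactly
`k` 1's and `qk + p` 0's equals `(p/((q+1)k+p)) · C((q+1)k+p, k)`; in particular this
rational expression is an integer. -/
theorem count_q_dominating (k q p : ℕ) (hp : 1 ≤ p) :
    (Nat.card {l : List Bool //
        l.count true = k ∧ l.count false = q * k + p ∧ QDominating q l} : ℚ) =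
      (p : ℚ) / ((q + 1) * k + p) * Nat.choose ((q + 1) * k + p) k := by
  have hcard : Nat.card {l : List Bool //
      l.count true = k ∧ l.count false = q * k + p ∧ QDominating q l} =
      (CQDaux.S q (q * k + p) k).ncard := Nat.card_coe_set_eq _
  rw [hcard]
  have := CQDaux.key q (q * k + p + k) (q * k + p) k rfl (by omega) (by omega)
  rw [this]
  have hn : q * k + p + k = (q + 1) * k + p := by ring
  rw [hn]
  push_cast
  ring_nf
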